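/- arXiv:1902.08149 — 4 statements merged into one kernel-verified Lean document; each statement's English description precedes it below -/
import Mathlib

section
/- If nondeterministic automata A and A' are SCC-unambiguous (unambiguous from p to q for every pair of states p,q lying in the same strongly connected component), then the product automaton A × A' is SCC-unambiguous. -/
variable {Q Q' A R : Type*}

/-- `RunFrom Δ p w ρ`: `ρ` is the list of states visited after `p` along a run
reading `w` that starts in `p`. -/
def RunFrom (Δ : Q → A → Q → Prop) : Q → List A → List Q → Prop
  | _, [], [] => True
  | p, a :: w, q :: ρ => Δ p a q ∧ RunFrom Δ q w ρ
  | _, _, _ => False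

/-- There is a run from `p` to `q` reading `w`. -/
def HasRun (Δ : Q → A → Q → Prop) (p : Q) (w : List A) (q : Q) : Prop :=
  ∃ ρ, RunFrom Δ p w ρ ∧ (p :: ρ).getLast (List.cons_ne_nil _ _) = q

/-- `m`-fold power of a word. -/
def wpow (u : List A) (m : ℕ) : List A := (List.replicate m u).flatten

/-- Aperiodicity of a nondeterministic automaton. -/
def Aperiodic (Δ : Q → A → Q → Prop) : Prop :=
  ∃ m, 1 ≤ m ∧ ∀ (p q : Q) (u : List A), u ≠ [] →
    (HasRun Δ p (wpow u m) q ↔ HasRun Δ p (wpow u (m + 1)) q)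

/-- `p` and `q` are in the same strongly connected component. -/
def SameSCC (Δ : Q → A → Q → Prop) (p q : Q) : Prop :=
  p = q ∨ ((∃ u : List A, u ≠ [] ∧ HasRun Δ p u q) ∧ (∃ v : List A, v ≠ [] ∧ HasRun Δ q v p))

/-- The automaton is unambiguous from `p` to `q`. -/
def UnambFromTo (Δ : Q → A → Q → Prop) (p q : Q) : Prop :=
  ∀ (u : List A) (ρ₁ ρ₂ : List Q), u ≠ [] →
    RunFrom Δ p u ρ₁ → RunFrom Δ p u ρ₂ →
    (p :: ρ₁).getLast (List.cons_ne_nil _ _) = q →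
    (p :: ρ₂).getLast (List.cons_ne_nil _ _) = q → ρ₁ = ρ₂

def SCCUnambiguous (Δ : Q → A → Q → Prop) : Prop :=
  ∀ p q : Q, SameSCC Δ p q → UnambFromTo Δ p q

/-- The set of accepting runs on `w`, represented as pairs of an initial state and
the list of subsequently visited states. -/
def AccRuns (Δ : Q → A → Q → Prop) (I F : Set Q) (w : List A) : Set (Q × List Q) :=
  {x | x.1 ∈ I ∧ RunFrom Δ x.1 w x.2 ∧ (x.1 :: x.2).getLast (List.cons_ne_nil _ _) ∈ F}

/-- The sequence of weights along a run. -/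
def wgtSeq (wgt : Q → A → Q → R) : Q → List A → List Q → List R
  | p, a :: w, q :: ρ => wgt p a q :: wgtSeq wgt q w ρ
  | _, _, _ => []


/-- Product transition relation. -/
def prodTrans (Δ : Q → A → Q → Prop) (Δ' : Q' → A → Q' → Prop) :
    Q × Q' → A → Q × Q' → Prop :=
  fun p a q => Δ p.1 a q.1 ∧ Δ' p.2 a q.2

lemma runFrom_fst {Δ : Q → A → Q → Prop} {Δ' : Q' → A → Q' → Prop} :
    ∀ (p : Q × Q') (u : List A) (ρ : List (Q × Q')),
    RunFrom (prodTrans Δ Δ') p u ρ → RunFrom Δ p.1 u (ρ.map Prod.fst)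
  | _, [], [], _ => trivial
  | p, a :: w, q :: ρ, h => ⟨h.1.1, runFrom_fst q w ρ h.2⟩
  | _, [], _ :: _, h => h.elim
  | _, _ :: _, [], h => h.elim

lemma runFrom_snd {Δ : Q → A → Q → Prop} {Δ' : Q' → A → Q' → Prop} :
    ∀ (p : Q × Q') (u : List A) (ρ : List (Q × Q')),
    RunFrom (prodTrans Δ Δ') p u ρ → RunFrom Δ' p.2 u (ρ.map Prod.snd)
  | _, [], [], _ => trivial
  | p, a :: w, q :: ρ, h => ⟨h.1.2, runFrom_snd q w ρ h.2⟩
  | _, [], _ :: _, h => h.elim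
  | _, _ :: _, [], h => h.elim

lemma getLast_map_cons {α β : Type*} (f : α → β) (p : α) (ρ : List α) :
    (f p :: ρ.map f).getLast (List.cons_ne_nil _ _)
      = f ((p :: ρ).getLast (List.cons_ne_nil _ _)) := by
  induction ρ generalizing p with
  | nil => rfl
  | cons x ρ ih => rw [List.map_cons, List.getLast_cons (List.cons_ne_nil _ _),
      List.getLast_cons (List.cons_ne_nil _ _)]; exact ih x

lemma hasRun_fst {Δ : Q → A → Q → Prop} {Δ' : Q' → A → Q' → Prop}
    {p q : Q × Q'} {u : List A} (hr : HasRun (prodTrans Δ Δ') p u q) :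
    HasRun Δ p.1 u q.1 := by
  obtain ⟨ρ, h1, h2⟩ := hr
  exact ⟨ρ.map Prod.fst, runFrom_fst p u ρ h1, by rw [getLast_map_cons, h2]⟩

lemma hasRun_snd {Δ : Q → A → Q → Prop} {Δ' : Q' → A → Q' → Prop}
    {p q : Q × Q'} {u : List A} (hr : HasRun (prodTrans Δ Δ') p u q) :
    HasRun Δ' p.2 u q.2 := by
  obtain ⟨ρ, h1, h2⟩ := hr
  exact ⟨ρ.map Prod.snd, runFrom_snd p u ρ h1, by rw [getLast_map_cons, h2]⟩

lemma map_prod_inj {α β : Type*} :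
    ∀ (l₁ l₂ : List (α × β)), l₁.map Prod.fst = l₂.map Prod.fst →
      l₁.map Prod.snd = l₂.map Prod.snd → l₁ = l₂
  | [], [], _, _ => rfl
  | x :: l₁, y :: l₂, h1, h2 => by
    simp only [List.map_cons, List.cons.injEq] at h1 h2
    rw [Prod.ext h1.1 h2.1, map_prod_inj l₁ l₂ h1.2 h2.2]
  | [], _ :: _, h, _ => by simp at h
  | _ :: _, [], h, _ => by simp at h

/-- If two nondeterministic automata are SCC-unambiguous, then so is their product. -/
theorem sccUnambiguous_prodTrans (Δ : Q → A → Q → Prop) (Δ' : Q' → A → Q' → Prop)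
    (h : SCCUnambiguous Δ) (h' : SCCUnambiguous Δ') :
    SCCUnambiguous (prodTrans Δ Δ') := by
  intro p q hscc u ρ₁ ρ₂ hu hr1 hr2 hl1 hl2
  have hscc1 : SameSCC Δ p.1 q.1 := by
    rcases hscc with rfl | ⟨⟨u, hu, hr⟩, ⟨v, hv, hr'⟩⟩
    · exact Or.inl rfl
    · exact Or.inr ⟨⟨u, hu, hasRun_fst hr⟩, ⟨v, hv, hasRun_fst hr'⟩⟩
  have hscc2 : SameSCC Δ' p.2 q.2 := by
    rcases hscc with rfl | ⟨⟨u, hu, hr⟩, ⟨v, hv, hr'⟩⟩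
    · exact Or.inl rfl
    · exact Or.inr ⟨⟨u, hu, hasRun_snd hr⟩, ⟨v, hv, hasRun_snd hr'⟩⟩
  have e1 : ρ₁.map Prod.fst = ρ₂.map Prod.fst :=
    h p.1 q.1 hscc1 u _ _ hu (runFrom_fst p u ρ₁ hr1) (runFrom_fst p u ρ₂ hr2)
      (by rw [getLast_map_cons, hl1]) (by rw [getLast_map_cons, hl2])
  have e2 : ρ₁.map Prod.snd = ρ₂.map Prod.snd :=
    h' p.2 q.2 hscc2 u _ _ hu (runFrom_snd p u ρ₁ hr1) (runFrom_snd p u ρ₂ hr2)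
      (by rw [getLast_map_cons, hl1]) (by rw [getLast_map_cons, hl2])
  exact map_prod_inj ρ₁ ρ₂ e1 e2
end

section
/- Let A be a trimmed nondeterministic automaton (every state is reachable from an initial state and co-reachable to a final state). Then A is polynomially ambiguous (the number of accepting runs on any word w is bounded by a polynomial in |w|) if and only if A is SCC-unambiguous. -/
variable {Q Q' A R : Type*}

section Aux
variable {Δ : Q → A → Q → Prop}

/-- End state of a run starting at `p` visiting `ρ`. -/
def endSt (p : Q) (ρ : List Q) : Q := ρ.getLastD p

lemma endSt_nil (p : Q) : endSt p ([] : List Q) = p := rfl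

lemma endSt_cons (p q : Q) (ρ : List Q) : endSt p (q :: ρ) = endSt q ρ :=
  List.getLastD_cons

lemma getLast_eq_endSt (p : Q) (ρ : List Q) :
    (p :: ρ).getLast (List.cons_ne_nil _ _) = endSt p ρ := by
  induction ρ generalizing p with
  | nil => rfl
  | cons q ρ ih =>
    rw [List.getLast_cons (List.cons_ne_nil _ _), endSt_cons]
    exact ih q

lemma endSt_append (p : Q) (ρ₁ ρ₂ : List Q) :
    endSt p (ρ₁ ++ ρ₂) = endSt (endSt p ρ₁) ρ₂ := by
  induction ρ₁ generalizing p with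
  | nil => rfl
  | cons q ρ ih => simp [endSt_cons, ih]

lemma hasRun_iff (p : Q) (w : List A) (q : Q) :
    HasRun Δ p w q ↔ ∃ ρ, RunFrom Δ p w ρ ∧ endSt p ρ = q := by
  unfold HasRun
  simp only [getLast_eq_endSt]

lemma runFrom_nil {p : Q} {ρ : List Q} (h : RunFrom Δ p [] ρ) : ρ = [] := by
  cases ρ with
  | nil => rfl
  | cons q ρ => exact absurd h (by simp [RunFrom])

lemma runFrom_cons {p : Q} {a : A} {w : List A} {ρ : List Q}
    (h : RunFrom Δ p (a :: w) ρ) :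
    ∃ q ρ', ρ = q :: ρ' ∧ Δ p a q ∧ RunFrom Δ q w ρ' := by
  cases ρ with
  | nil => exact absurd h (by simp [RunFrom])
  | cons q ρ' => exact ⟨q, ρ', rfl, h.1, h.2⟩

lemma runFrom_length {p : Q} {w : List A} {ρ : List Q} (h : RunFrom Δ p w ρ) :
    ρ.length = w.length := by
  induction w generalizing p ρ with
  | nil => simp [runFrom_nil h]
  | cons a w ih =>
    obtain ⟨q, ρ', rfl, _, h2⟩ := runFrom_cons h
    simp [ih h2]

lemma runFrom_append {p : Q} {u v : List A} {ρ₁ ρ₂ : List Q}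
    (h1 : RunFrom Δ p u ρ₁) (h2 : RunFrom Δ (endSt p ρ₁) v ρ₂) :
    RunFrom Δ p (u ++ v) (ρ₁ ++ ρ₂) := by
  induction u generalizing p ρ₁ with
  | nil => rw [runFrom_nil h1] at h2 ⊢; simpa [endSt_nil] using h2
  | cons a u ih =>
    obtain ⟨q, ρ', rfl, he, hr⟩ := runFrom_cons h1
    rw [endSt_cons] at h2
    exact ⟨he, ih hr h2⟩

lemma runFrom_append_split {p : Q} {u v : List A} {ρ : List Q}
    (h : RunFrom Δ p (u ++ v) ρ) :
    ∃ ρ₁ ρ₂, ρ = ρ₁ ++ ρ₂ ∧ RunFrom Δ p u ρ₁ ∧ RunFrom Δ (endSt p ρ₁) v ρ₂ := by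
  induction u generalizing p ρ with
  | nil => exact ⟨[], ρ, rfl, trivial, by simpa [endSt_nil] using h⟩
  | cons a u ih =>
    obtain ⟨q, ρ', rfl, he, hr⟩ := runFrom_cons (by simpa using h)
    obtain ⟨ρ₁, ρ₂, rfl, h1, h2⟩ := ih hr
    exact ⟨q :: ρ₁, ρ₂, rfl, ⟨he, h1⟩, by simpa [endSt_cons] using h2⟩

lemma hasRun_trans {p q r : Q} {u v : List A}
    (h1 : HasRun Δ p u q) (h2 : HasRun Δ q v r) : HasRun Δ p (u ++ v) r := by
  rw [hasRun_iff] at h1 h2 ⊢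
  obtain ⟨ρ₁, hr1, he1⟩ := h1
  obtain ⟨ρ₂, hr2, he2⟩ := h2
  exact ⟨ρ₁ ++ ρ₂, runFrom_append hr1 (he1 ▸ hr2), by rw [endSt_append, he1, he2]⟩

lemma hasRun_refl (p : Q) : HasRun Δ p [] p := ⟨[], trivial, rfl⟩

lemma hasRun_single {p q : Q} {a : A} (h : Δ p a q) : HasRun Δ p [a] q :=
  ⟨[q], ⟨h, trivial⟩, rfl⟩

lemma sameSCC_refl (p : Q) : SameSCC Δ p p := Or.inl rfl

lemma sameSCC_symm {p q : Q} (h : SameSCC Δ p q) : SameSCC Δ q p := by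
  rcases h with h | ⟨h1, h2⟩
  · exact Or.inl h.symm
  · exact Or.inr ⟨h2, h1⟩

lemma sameSCC_trans {p q r : Q} (h1 : SameSCC Δ p q) (h2 : SameSCC Δ q r) :
    SameSCC Δ p r := by
  rcases h1 with rfl | ⟨⟨u, hu, hru⟩, ⟨v, hv, hrv⟩⟩
  · exact h2
  rcases h2 with rfl | ⟨⟨u', hu', hru'⟩, ⟨v', hv', hrv'⟩⟩
  · exact Or.inr ⟨⟨u, hu, hru⟩, ⟨v, hv, hrv⟩⟩
  · exact Or.inr ⟨⟨u ++ u', by simp [hu], hasRun_trans hru hru'⟩,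
      ⟨v' ++ v, by simp [hv'], hasRun_trans hrv' hrv⟩⟩

end Aux

section Codes
open Classical
variable {Δ : Q → A → Q → Prop}

/-- Break codes along a run: `some (x, y)` at steps leaving the SCC. -/
noncomputable def codes (Δ : Q → A → Q → Prop) : Q → List Q → List (Option (Q × Q))
  | _, [] => []
  | p, q :: ρ => (if SameSCC Δ p q then none else some (p, q)) :: codes Δ q ρ

@[simp] lemma codes_nil (p : Q) : codes Δ p [] = [] := rfl

lemma codes_cons (p q : Q) (ρ : List Q) :
    codes Δ p (q :: ρ) =
      (if SameSCC Δ p q then none else some (p, q)) :: codes Δ q ρ := by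
  simp [codes]

lemma codes_length (p : Q) (ρ : List Q) : (codes Δ p ρ).length = ρ.length := by
  induction ρ generalizing p with
  | nil => rfl
  | cons q ρ ih => rw [codes_cons]; simp [ih]

lemma codes_allNone_sameSCC {p : Q} {ρ : List Q}
    (h : ∀ o ∈ codes Δ p ρ, o = none) : SameSCC Δ p (endSt p ρ) := by
  induction ρ generalizing p with
  | nil => exact sameSCC_refl p
  | cons q ρ ih =>
    rw [codes_cons] at h
    have h1 : SameSCC Δ p q := by
      by_contra hc
      have := h _ (List.mem_cons_self)
      simp [hc] at this
    rw [endSt_cons]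
    exact sameSCC_trans h1 (ih fun o ho => h o (List.mem_cons_of_mem _ ho))

lemma codes_split {p : Q} {ρ : List Q} {d e : List (Option (Q × Q))} {x y : Q}
    (h : codes Δ p ρ = d ++ some (x, y) :: e) :
    ∃ α β, ρ = α ++ y :: β ∧ α.length = d.length ∧ endSt p α = x ∧
      ¬ SameSCC Δ x y ∧ codes Δ p α = d ∧ codes Δ y β = e := by
  induction ρ generalizing p d with
  | nil => simp at h
  | cons q ρ ih =>
    rw [codes_cons] at h
    cases d with
    | nil =>
      simp only [List.nil_append, List.cons.injEq] at h
      have h1 := h.1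
      by_cases hs : SameSCC Δ p q
      · simp [hs] at h1
      · simp only [hs, if_false, Option.some.injEq, Prod.mk.injEq] at h1
        obtain ⟨rfl, rfl⟩ := h1
        exact ⟨[], ρ, rfl, rfl, rfl, hs, rfl, h.2⟩
    | cons o d =>
      simp only [List.cons_append, List.cons.injEq] at h
      obtain ⟨α, β, rfl, hlen, hend, hns, hc1, hc2⟩ := ih h.2
      exact ⟨q :: α, β, rfl, by simp [hlen], by rwa [endSt_cons], hns,
        by rw [codes_cons, h.1, hc1], hc2⟩

/-- Split an option list at its last `some`. -/
lemma split_last_some {γ : Type*} (c : List (Option γ)) (h : ∃ o ∈ c, o.isSome) :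
    ∃ (d : List (Option γ)) (a : γ) (e : List (Option γ)), c = d ++ some a :: e ∧ ∀ o ∈ e, o = none := by
  induction c using List.reverseRecOn with
  | nil => simp at h
  | append_singleton c o ih =>
    cases o with
    | some a => exact ⟨c, a, [], rfl, by simp⟩
    | none =>
      have h' : ∃ o ∈ c, o.isSome := by
        obtain ⟨o, ho, hs⟩ := h
        rcases List.mem_append.1 ho with h1 | h1
        · exact ⟨o, h1, hs⟩
        · simp at h1; subst h1; simp at hs
      obtain ⟨d, a, e, rfl, he⟩ := ih h'
      exact ⟨d, a, e ++ [none], by simp, by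
        intro o ho
        rcases List.mem_append.1 ho with h1 | h1
        · exact he o h1
        · simpa using h1⟩

end Codes

section Unique
variable {Δ : Q → A → Q → Prop}

lemma runFrom_split {p : Q} {w : List A} {ρ₁ ρ₂ : List Q}
    (h : RunFrom Δ p w (ρ₁ ++ ρ₂)) :
    RunFrom Δ p (w.take ρ₁.length) ρ₁ ∧
      RunFrom Δ (endSt p ρ₁) (w.drop ρ₁.length) ρ₂ := by
  have htot : ρ₁.length + ρ₂.length = w.length := by
    simpa using runFrom_length h
  have hw : w = w.take ρ₁.length ++ w.drop ρ₁.length := (List.take_append_drop _ _).symm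
  rw [hw] at h
  obtain ⟨ρa, ρb, heq, ha, hb⟩ := runFrom_append_split h
  have hlen : ρ₁.length = ρa.length := by
    have h1 := runFrom_length ha
    simp only [List.length_take] at h1
    omega
  obtain ⟨h', h''⟩ := List.append_inj heq hlen
  subst h'; subst h''
  exact ⟨ha, hb⟩

lemma runs_unique_noBreak (hU : SCCUnambiguous Δ) {p : Q} {w : List A}
    {ρ₁ ρ₂ : List Q} (h1 : RunFrom Δ p w ρ₁) (h2 : RunFrom Δ p w ρ₂)
    (hn : ∀ o ∈ codes Δ p ρ₁, o = none) (he : endSt p ρ₁ = endSt p ρ₂) :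
    ρ₁ = ρ₂ := by
  cases w with
  | nil => rw [runFrom_nil h1, runFrom_nil h2]
  | cons a w =>
    exact hU p (endSt p ρ₁) (codes_allNone_sameSCC hn) (a :: w) ρ₁ ρ₂
      (List.cons_ne_nil _ _) h1 h2 (getLast_eq_endSt _ _)
      (by rw [getLast_eq_endSt, he])

lemma runs_unique (hU : SCCUnambiguous Δ) :
    ∀ (n : ℕ) (w : List A) (p : Q) (ρ₁ ρ₂ : List Q), w.length ≤ n →
      RunFrom Δ p w ρ₁ → RunFrom Δ p w ρ₂ →
      codes Δ p ρ₁ = codes Δ p ρ₂ → endSt p ρ₁ = endSt p ρ₂ → ρ₁ = ρ₂ := by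
  intro n
  induction n with
  | zero =>
    intro w p ρ₁ ρ₂ hn h1 h2 _ _
    have hw : w = [] := List.length_eq_zero_iff.1 (Nat.le_zero.1 hn)
    subst hw
    rw [runFrom_nil h1, runFrom_nil h2]
  | succ n ih =>
    intro w p ρ₁ ρ₂ hn h1 h2 hc he
    by_cases hall : ∀ o ∈ codes Δ p ρ₁, o = none
    · exact runs_unique_noBreak hU h1 h2 hall he
    · push_neg at hall
      obtain ⟨o, ho, hne⟩ := hall
      obtain ⟨d, ⟨x, y⟩, e, hsplit, henone⟩ :=
        split_last_some (codes Δ p ρ₁) ⟨o, ho, Option.isSome_iff_ne_none.2 hne⟩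
      obtain ⟨α₁, β₁, hr1, hl1, hend1, hns, hcd1, hce1⟩ := codes_split hsplit
      have hsplit2 : codes Δ p ρ₂ = d ++ some (x, y) :: e := hc ▸ hsplit
      obtain ⟨α₂, β₂, hr2, hl2, hend2, -, hcd2, hce2⟩ := codes_split hsplit2
      subst hr1; subst hr2
      have hll : α₂.length = α₁.length := hl2.trans hl1.symm
      obtain ⟨hp1, hm1⟩ := runFrom_split h1
      obtain ⟨hp2, hm2⟩ := runFrom_split h2
      rw [hll] at hp2 hm2
      -- recurse on the prefix
      have hwlen : w.length = α₁.length + (β₁.length + 1) := by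
        have := runFrom_length h1; simp at this; omega
      have htlen : (w.take α₁.length).length ≤ n := by
        simp only [List.length_take]; omega
      have hα : α₁ = α₂ :=
        ih _ _ _ _ htlen hp1 hp2 (hcd1.trans hcd2.symm) (hend1.trans hend2.symm)
      subst hα
      -- middle and tail
      rw [hend1] at hm1
      rw [hend2] at hm2
      obtain ⟨a, w₂, hwd⟩ : ∃ a w₂, w.drop α₁.length = a :: w₂ := by
        cases hdw : w.drop α₁.length with
        | nil =>
            exfalso
            have := congrArg List.length hdw
            simp only [List.length_drop] at this
            simp at this
            omega
        | cons a w₂ => exact ⟨a, w₂, rfl⟩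
      rw [hwd] at hm1 hm2
      obtain ⟨y1, β₁', heq1, hd1, hr1'⟩ := runFrom_cons hm1
      obtain ⟨y2, β₂', heq2, hd2, hr2'⟩ := runFrom_cons hm2
      injection heq1 with hy1 hb1
      subst hy1; subst hb1
      injection heq2 with hy2 hb2
      subst hy2; subst hb2
      have hends : endSt y β₁ = endSt y β₂ := by
        rw [endSt_append, endSt_append, hend1, endSt_cons, endSt_cons] at he
        exact he
      have hβ : β₁ = β₂ :=
        runs_unique_noBreak hU hr1' hr2' (by rw [hce1]; exact henone) hends
      rw [hβ]

end Unique

section Compact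
variable {γ : Type*} {Δ : Q → A → Q → Prop}

/-- Compact representation of an option list: positions and values of `some`s. -/
def compact : List (Option γ) → List (ℕ × γ)
  | [] => []
  | none :: c => (compact c).map (fun e => (e.1 + 1, e.2))
  | some a :: c => (0, a) :: (compact c).map (fun e => (e.1 + 1, e.2))

lemma compact_pos : ∀ (c : List (Option γ)), ∀ e ∈ compact c, e.1 < c.length := by
  intro c
  induction c with
  | nil => simp [compact]
  | cons o c ih =>
    cases o with
    | none =>
      intro e he
      simp only [compact, List.mem_map] at he
      obtain ⟨e', he', rfl⟩ := he
      have := ih e' he'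
      simp only [List.length_cons]
      omega
    | some a =>
      intro e he
      simp only [compact, List.mem_cons, List.mem_map] at he
      rcases he with rfl | ⟨e', he', rfl⟩
      · simp
      · have := ih e' he'
        simp only [List.length_cons]
        omega

lemma shift_injective : Function.Injective (fun e : ℕ × γ => (e.1 + 1, e.2)) := by
  intro a b h
  simp only [Prod.mk.injEq] at h
  exact Prod.ext (by omega) h.2

lemma compact_inj : ∀ (c₁ c₂ : List (Option γ)), c₁.length = c₂.length →
    compact c₁ = compact c₂ → c₁ = c₂ := by
  intro c₁
  induction c₁ with
  | nil =>
    intro c₂ hl _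
    exact (List.length_eq_zero_iff.1 hl.symm).symm ▸ rfl
  | cons o c ih =>
    intro c₂ hl hc
    cases c₂ with
    | nil => simp at hl
    | cons o₂ c₂ =>
      simp only [List.length_cons, Nat.add_right_cancel_iff] at hl
      cases o with
      | none =>
        cases o₂ with
        | none =>
          simp only [compact] at hc
          rw [ih c₂ hl (List.map_injective_iff.2 shift_injective hc)]
        | some a₂ =>
          exfalso
          simp only [compact] at hc
          have : (0, a₂) ∈ (compact c).map (fun e : ℕ × γ => (e.1 + 1, e.2)) := by
            rw [hc]; exact List.mem_cons_self
          simp only [List.mem_map] at this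
          obtain ⟨e, -, he⟩ := this
          simp only [Prod.mk.injEq] at he
          omega
      | some a =>
        cases o₂ with
        | none =>
          exfalso
          simp only [compact] at hc
          have : (0, a) ∈ (compact c₂).map (fun e : ℕ × γ => (e.1 + 1, e.2)) := by
            rw [← hc]; exact List.mem_cons_self
          simp only [List.mem_map] at this
          obtain ⟨e, -, he⟩ := this
          simp only [Prod.mk.injEq] at he
          omega
        | some a₂ =>
          simp only [compact, List.cons.injEq, Prod.mk.injEq] at hc
          obtain ⟨⟨-, rfl⟩, hc2⟩ := hc
          rw [ih c₂ hl (List.map_injective_iff.2 shift_injective hc2)]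

lemma compact_length_eq_filterMap (c : List (Option γ)) :
    (compact c).length = (c.filterMap id).length := by
  induction c with
  | nil => rfl
  | cons o c ih =>
    cases o with
    | none => simpa [compact] using ih
    | some a => simpa [compact] using ih

/-- Every `some` entry `(x, y)` of `codes` along a run: `x` is reachable from the
start, there is an edge `x → y`, and `x, y` are not in the same SCC. -/
lemma codes_mem_spec {p : Q} {w : List A} {ρ : List Q} (h : RunFrom Δ p w ρ) :
    ∀ xy ∈ (codes Δ p ρ).filterMap id,
      (∃ u, HasRun Δ p u xy.1) ∧ (∃ a, Δ xy.1 a xy.2) ∧ ¬ SameSCC Δ xy.1 xy.2 := by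
  induction ρ generalizing p w with
  | nil => simp
  | cons q ρ ih =>
    cases w with
    | nil => exact absurd h (by simp [RunFrom])
    | cons a w =>
      obtain ⟨q', ρ', heq, hd, hr⟩ := runFrom_cons h
      injection heq with h1 h2; subst h1; subst h2
      intro xy hxy
      rw [codes_cons] at hxy
      by_cases hs : SameSCC Δ p q
      · simp only [hs, if_true, List.filterMap_cons, id] at hxy
        obtain ⟨hu, he, hn⟩ := ih hr xy hxy
        obtain ⟨u, hu⟩ := hu
        exact ⟨⟨a :: u, hasRun_trans (hasRun_single hd) hu⟩, he, hn⟩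
      · simp only [hs, if_false, List.filterMap_cons, id, List.mem_cons] at hxy
        rcases hxy with rfl | hxy
        · exact ⟨⟨[], hasRun_refl p⟩, ⟨a, hd⟩, hs⟩
        · obtain ⟨hu, he, hn⟩ := ih hr xy hxy
          obtain ⟨u, hu⟩ := hu
          exact ⟨⟨a :: u, hasRun_trans (hasRun_single hd) hu⟩, he, hn⟩

/-- The target states of breaks along a run are pairwise in different SCCs. -/
lemma codes_targets_pairwise {p : Q} {w : List A} {ρ : List Q}
    (h : RunFrom Δ p w ρ) :
    (((codes Δ p ρ).filterMap id).map Prod.snd).Pairwise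
      (fun y y' => ¬ SameSCC Δ y y') := by
  induction ρ generalizing p w with
  | nil => simp
  | cons q ρ ih =>
    cases w with
    | nil => exact absurd h (by simp [RunFrom])
    | cons a w =>
      obtain ⟨q', ρ', heq, hd, hr⟩ := runFrom_cons h
      injection heq with h1 h2; subst h1; subst h2
      rw [codes_cons]
      by_cases hs : SameSCC Δ p q
      · simpa [hs, List.filterMap_cons] using ih hr
      · simp only [hs, if_false, List.filterMap_cons, id, List.map_cons]
        rw [List.pairwise_cons]
        refine ⟨?_, ih hr⟩
        intro y' hy'
        simp only [List.mem_map] at hy'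
        obtain ⟨⟨x', y''⟩, hxy', hsnd⟩ := hy'
        subst hsnd
        obtain ⟨⟨u, hu⟩, ⟨a', he'⟩, hn'⟩ := codes_mem_spec hr _ hxy'
        intro hcon
        apply hn'
        rcases hcon with rfl | ⟨⟨v, hv, hrv⟩, ⟨v', hv', hrv'⟩⟩
        · -- q = y'
          cases u with
          | nil =>
            obtain ⟨ρ0, h0, he0⟩ := hu
            rw [runFrom_nil h0] at he0
            have hx : x' = q := by simpa using he0.symm
            rw [hx]
            exact sameSCC_refl q
          | cons b u =>
            exact Or.inr ⟨⟨[a'], by simp, hasRun_single he'⟩,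
              ⟨b :: u, by simp, hu⟩⟩
        · -- mutual reachability between q and y'
          exact Or.inr ⟨⟨[a'], by simp, hasRun_single he'⟩,
            ⟨v' ++ u, by simp [hv'], hasRun_trans hrv' hu⟩⟩

lemma compact_codes_length_le [Fintype Q] {p : Q} {w : List A} {ρ : List Q}
    (h : RunFrom Δ p w ρ) :
    (compact (codes Δ p ρ)).length ≤ Fintype.card Q := by
  rw [compact_length_eq_filterMap]
  have hpw := codes_targets_pairwise h
  have hnodup : (((codes Δ p ρ).filterMap id).map Prod.snd).Nodup :=
    hpw.imp fun hne => by rintro rfl; exact hne (sameSCC_refl _)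
  have := hnodup.length_le_card
  simpa using this

end Compact

section Count
variable {Δ : Q → A → Q → Prop}

lemma accRuns_ncard_le [Fintype Q] (hU : SCCUnambiguous Δ) (I F : Set Q)
    (w : List A) :
    (AccRuns Δ I F w).ncard ≤
      Fintype.card Q * (Fintype.card Q *
        ((w.length + 1) * (Fintype.card Q * Fintype.card Q) + 1) ^ Fintype.card Q) := by
  classical
  set n := Fintype.card Q with hn
  set L := w.length with hL
  set φ : ℕ × Q × Q → Fin (L + 1) × Q × Q :=
    fun e => (⟨min e.1 L, Nat.lt_succ_of_le (min_le_right _ _)⟩, e.2) with hφ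
  set f : Q × List Q → Q × Q × (Fin n → Option (Fin (L + 1) × Q × Q)) :=
    fun x => (x.1, endSt x.1 x.2,
      fun i => ((compact (codes Δ x.1 x.2))[i.1]?).map φ) with hf
  have hinj : Set.InjOn f (AccRuns Δ I F w) := by
    rintro ⟨p₁, ρ₁⟩ hx ⟨p₂, ρ₂⟩ hy heq
    obtain ⟨-, hr1, -⟩ := hx
    obtain ⟨-, hr2, -⟩ := hy
    simp only [hf, Prod.mk.injEq] at heq
    obtain ⟨h1, h2, h3⟩ := heq
    subst h1
    have hlen1 : (codes Δ p₁ ρ₁).length = L := by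
      rw [codes_length, runFrom_length hr1]
    have hlen2 : (codes Δ p₁ ρ₂).length = L := by
      rw [codes_length, runFrom_length hr2]
    have hcle1 := compact_codes_length_le hr1
    have hcle2 := compact_codes_length_le hr2
    have hcomp : compact (codes Δ p₁ ρ₁) = compact (codes Δ p₁ ρ₂) := by
      apply List.ext_getElem?
      intro i
      by_cases hi : i < n
      · have h3i := congrFun h3 ⟨i, hi⟩
        simp only at h3i
        cases hg1 : (compact (codes Δ p₁ ρ₁))[i]? with
        | none =>
          rw [hg1] at h3i
          cases hg2 : (compact (codes Δ p₁ ρ₂))[i]? with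
          | none => rfl
          | some e₂ => rw [hg2] at h3i; simp at h3i
        | some e₁ =>
          rw [hg1] at h3i
          cases hg2 : (compact (codes Δ p₁ ρ₂))[i]? with
          | none => rw [hg2] at h3i; simp at h3i
          | some e₂ =>
            rw [hg2] at h3i
            simp only [Option.map_some, Option.some.injEq, hφ, Prod.mk.injEq,
              Fin.mk.injEq] at h3i
            obtain ⟨hmin, hsnd⟩ := h3i
            have hm1 : e₁.1 < L := by
              have := compact_pos _ e₁ (List.mem_of_getElem? hg1)
              rwa [hlen1] at this
            have hm2 : e₂.1 < L := by
              have := compact_pos _ e₂ (List.mem_of_getElem? hg2)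
              rwa [hlen2] at this
            have : e₁.1 = e₂.1 := by
              rw [min_eq_left hm1.le, min_eq_left hm2.le] at hmin
              exact hmin
            rw [Prod.ext this hsnd]
      · push_neg at hi
        rw [List.getElem?_eq_none_iff.2 (hcle1.trans hi), List.getElem?_eq_none_iff.2 (hcle2.trans hi)]
    have hcodes : codes Δ p₁ ρ₁ = codes Δ p₁ ρ₂ :=
      compact_inj _ _ (hlen1.trans hlen2.symm) hcomp
    have hρ : ρ₁ = ρ₂ :=
      runs_unique hU w.length w p₁ ρ₁ ρ₂ le_rfl hr1 hr2 hcodes h2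
    rw [hρ]
  have hmaps : ∀ x ∈ AccRuns Δ I F w, f x ∈
      (Set.univ : Set (Q × Q × (Fin n → Option (Fin (L + 1) × Q × Q)))) :=
    fun x _ => trivial
  have hcard := Set.ncard_le_ncard_of_injOn f hmaps hinj Set.finite_univ
  rw [Set.ncard_univ, Nat.card_eq_fintype_card] at hcard
  refine hcard.trans ?_
  simp only [Fintype.card_prod, Fintype.card_fun, Fintype.card_option,
    Fintype.card_fin]
  exact le_of_eq (by ring)

end Count

section Pump
variable {Δ : Q → A → Q → Prop}

lemma exp_beats_poly (c k : ℕ) : ∃ m, 1 ≤ m ∧ c * (m + 1) ^ k < 2 ^ m := by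
  have h := isLittleO_pow_const_const_pow_of_one_lt (R := ℝ) k (r := 2) one_lt_two
  have hc : (0:ℝ) < 1 / (2 * (c + 1)) := by positivity
  have h2 := h.def hc
  rw [Filter.eventually_atTop] at h2
  obtain ⟨N, hN⟩ := h2
  refine ⟨max N 1, le_max_right _ _, ?_⟩
  set m := max N 1 with hm
  have hmN : N ≤ m + 1 := le_trans (le_max_left _ _) (Nat.le_succ m)
  have hb := hN (m + 1) hmN
  have hb' : ((m : ℝ) + 1) ^ k ≤ 1 / (2 * (c + 1)) * 2 ^ (m + 1) := by
    have h2pos : (0:ℝ) ≤ (2:ℝ) ^ (m + 1) := by positivity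
    rw [Real.norm_eq_abs, Real.norm_eq_abs, abs_of_nonneg (by positivity),
      abs_of_nonneg h2pos] at hb
    push_cast at hb
    exact hb
  have key : (c : ℝ) * ((m : ℝ) + 1) ^ k < 2 ^ m := by
    calc (c : ℝ) * ((m : ℝ) + 1) ^ k
        ≤ c * (1 / (2 * (c + 1)) * 2 ^ (m + 1)) :=
          mul_le_mul_of_nonneg_left hb' (by positivity)
      _ = (c / (c + 1)) * 2 ^ m := by
          rw [pow_succ]; field_simp
      _ < 1 * 2 ^ m := by
          apply mul_lt_mul_of_pos_right _ (by positivity)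
          rw [div_lt_one (by positivity)]
          linarith
      _ = 2 ^ m := one_mul _
  exact_mod_cast key

lemma poly_eval_le (P : Polynomial ℕ) (x : ℕ) (hx : 1 ≤ x) :
    P.eval x ≤ P.eval 1 * x ^ P.natDegree := by
  conv_lhs => rw [Polynomial.eval_eq_sum_range]
  have h1 : P.eval 1 = ∑ i ∈ Finset.range (P.natDegree + 1), P.coeff i := by
    rw [Polynomial.eval_eq_sum_range]; simp
  rw [h1, Finset.sum_mul]
  apply Finset.sum_le_sum
  intro i hi
  apply Nat.mul_le_mul_left
  exact Nat.pow_le_pow_right hx (Nat.lt_succ_iff.1 (Finset.mem_range.1 hi))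

lemma accRuns_finite [Finite Q] (Δ : Q → A → Q → Prop) (I F : Set Q) (w : List A) :
    (AccRuns Δ I F w).Finite := by
  apply Set.Finite.subset
    (Set.Finite.prod Set.finite_univ (List.finite_length_eq Q w.length))
  rintro ⟨p, ρ⟩ ⟨-, hr, -⟩
  exact ⟨trivial, runFrom_length hr⟩

lemma runFrom_split_at_mem {p z : Q} {w : List A} {ρ : List Q}
    (h : RunFrom Δ p w ρ) (hz : z ∈ p :: ρ) :
    ∃ w₁ w₂ ρ₁ ρ₂, w = w₁ ++ w₂ ∧ ρ = ρ₁ ++ ρ₂ ∧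
      RunFrom Δ p w₁ ρ₁ ∧ endSt p ρ₁ = z ∧ RunFrom Δ z w₂ ρ₂ ∧
      endSt z ρ₂ = endSt p ρ := by
  induction ρ generalizing p w with
  | nil =>
    have hw : w = [] := by
      have := runFrom_length h
      simp only [List.length_nil] at this
      exact List.length_eq_zero_iff.1 this.symm
    subst hw
    have hzp : z = p := by simpa using hz
    subst hzp
    exact ⟨[], [], [], [], rfl, rfl, trivial, rfl, trivial, rfl⟩
  | cons q ρ ih =>
    rcases List.mem_cons.1 hz with hzp | hz'
    · subst hzp
      exact ⟨[], w, [], q :: ρ, rfl, rfl, trivial, rfl, h, rfl⟩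
    · cases w with
      | nil => exact absurd h (by simp [RunFrom])
      | cons a w =>
        obtain ⟨q', ρ', heq, hd, hr⟩ := runFrom_cons h
        injection heq with h1 h2; subst h1; subst h2
        obtain ⟨w₁, w₂, ρ₁, ρ₂, hw, hρ, hrun1, hend1, hrun2, hend2⟩ := ih hr hz'
        refine ⟨a :: w₁, w₂, q :: ρ₁, ρ₂, by rw [hw]; rfl, by rw [hρ]; rfl,
          ⟨hd, hrun1⟩, by rwa [endSt_cons], hrun2, ?_⟩
        rw [hend2, endSt_cons]

def catRuns (ρa ρb : List Q) (cs : List Bool) : List Q :=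
  (cs.map fun b => if b then ρa else ρb).flatten

lemma wpow_succ (s : List A) (m : ℕ) : wpow s (m + 1) = s ++ wpow s m := by
  simp [wpow, List.replicate_succ]

lemma catRuns_run {z : Q} {s : List A} {ρa ρb : List Q}
    (ha : RunFrom Δ z s ρa) (hea : endSt z ρa = z)
    (hb : RunFrom Δ z s ρb) (heb : endSt z ρb = z) :
    ∀ cs : List Bool, RunFrom Δ z (wpow s cs.length) (catRuns ρa ρb cs) ∧
      endSt z (catRuns ρa ρb cs) = z := by
  intro cs
  induction cs with
  | nil => exact ⟨trivial, rfl⟩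
  | cons b cs ih =>
    have hstep : RunFrom Δ z s (if b then ρa else ρb) ∧
        endSt z (if b then ρa else ρb) = z := by
      cases b <;> simp [ha, hb, hea, heb]
    constructor
    · rw [List.length_cons, wpow_succ]
      have := runFrom_append hstep.1 (by rw [hstep.2]; exact ih.1)
      simpa [catRuns] using this
    · show endSt z ((if b then ρa else ρb) ++ catRuns ρa ρb cs) = z
      rw [endSt_append, hstep.2, ih.2]

lemma catRuns_inj {ρa ρb : List Q} (hlen : ρa.length = ρb.length)
    (hne : ρa ≠ ρb) :
    ∀ cs₁ cs₂ : List Bool, cs₁.length = cs₂.length →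
      catRuns ρa ρb cs₁ = catRuns ρa ρb cs₂ → cs₁ = cs₂ := by
  intro cs₁
  induction cs₁ with
  | nil =>
    intro cs₂ hl _
    exact ((List.length_eq_zero_iff.1 hl.symm).symm ▸ rfl)
  | cons b₁ cs₁ ih =>
    intro cs₂ hl hc
    cases cs₂ with
    | nil => simp at hl
    | cons b₂ cs₂ =>
      simp only [List.length_cons, Nat.add_right_cancel_iff] at hl
      have hchunk : (if b₁ then ρa else ρb).length = (if b₂ then ρa else ρb).length := by
        cases b₁ <;> cases b₂ <;> simp [hlen]
      have hc' : (if b₁ then ρa else ρb) ++ catRuns ρa ρb cs₁ =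
          (if b₂ then ρa else ρb) ++ catRuns ρa ρb cs₂ := by
        simpa [catRuns] using hc
      obtain ⟨h1, h2⟩ := List.append_inj hc' hchunk
      have hb : b₁ = b₂ := by
        cases b₁ <;> cases b₂ <;> simp_all
      rw [hb, ih cs₂ hl h2]

end Pump

section Main
variable {Δ : Q → A → Q → Prop}

lemma wpow_length (s : List A) (m : ℕ) : (wpow s m).length = m * s.length := by
  induction m with
  | zero => simp [wpow]
  | succ m ih => rw [wpow_succ, List.length_append, ih]; ring

lemma poly_to_sccUnamb [Fintype Q] (Δ : Q → A → Q → Prop) (I F : Set Q)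
    (htrim : ∀ q : Q, ∃ (w : List A) (x : Q × List Q),
      x ∈ AccRuns Δ I F w ∧ q ∈ x.1 :: x.2)
    (hP : ∃ P : Polynomial ℕ, ∀ w : List A, w ≠ [] →
        (AccRuns Δ I F w).ncard ≤ P.eval w.length) :
    SCCUnambiguous Δ := by
  by_contra hc
  simp only [SCCUnambiguous, UnambFromTo] at hc
  push_neg at hc
  obtain ⟨p, q, hscc, u, ρ₁, ρ₂, hu, hr1, hr2, he1, he2, hne⟩ := hc
  rw [getLast_eq_endSt] at he1 he2
  -- build two distinct loops at `p` on a common word `s`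
  obtain ⟨s, ρa, ρb, hs, hra, hea, hrb, heb, hab⟩ :
      ∃ (s : List A) (ρa ρb : List Q), s ≠ [] ∧
        RunFrom Δ p s ρa ∧ endSt p ρa = p ∧
        RunFrom Δ p s ρb ∧ endSt p ρb = p ∧ ρa ≠ ρb := by
    rcases hscc with rfl | ⟨-, ⟨v, hv, hrv⟩⟩
    · exact ⟨u, ρ₁, ρ₂, hu, hr1, he1, hr2, he2, hne⟩
    · rw [hasRun_iff] at hrv
      obtain ⟨ρv, hrv', hev⟩ := hrv
      refine ⟨u ++ v, ρ₁ ++ ρv, ρ₂ ++ ρv, by simp [hu],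
        runFrom_append hr1 (by rw [he1]; exact hrv'),
        by rw [endSt_append, he1, hev],
        runFrom_append hr2 (by rw [he2]; exact hrv'),
        by rw [endSt_append, he2, hev], ?_⟩
      intro hEq
      exact hne (List.append_left_injective ρv hEq)
  have hlen_ab : ρa.length = ρb.length := by
    rw [runFrom_length hra, runFrom_length hrb]
  -- a trimmed accepting run through `p`
  obtain ⟨w0, ⟨p0, ρ0⟩, ⟨hI, hr0, hF⟩, hzmem⟩ := htrim p
  simp only at hzmem hI hr0 hF
  obtain ⟨w₁, w₂, ρpre, ρpost, hw0, hρ0, hpre, hprez, hpost, hpostend⟩ :=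
    runFrom_split_at_mem hr0 hzmem
  obtain ⟨P, hPb⟩ := hP
  set K := w₁.length + w₂.length + s.length with hK
  set d := P.natDegree with hd
  obtain ⟨m, hm1, hmlt⟩ := exp_beats_poly (P.eval 1 * K ^ d) d
  set W := w₁ ++ (wpow s m ++ w₂) with hW
  have hsl : 1 ≤ s.length := List.length_pos_iff.2 hs
  have hWlen : W.length = w₁.length + (m * s.length + w₂.length) := by
    simp [hW, wpow_length]
  have hW1 : 1 ≤ W.length := by
    have : 1 ≤ m * s.length := Nat.one_le_iff_ne_zero.2 (by positivity)
    omega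
  have hWne : W ≠ [] := by
    intro h
    rw [h] at hW1
    simp at hW1
  -- the injection from Boolean choice sequences
  set g : (Fin m → Bool) → Q × List Q := fun cs =>
    (p0, ρpre ++ (catRuns ρa ρb (List.ofFn cs) ++ ρpost)) with hg
  have hmem : ∀ cs, g cs ∈ AccRuns Δ I F W := by
    intro cs
    have hcat := catRuns_run hra hea hrb heb (List.ofFn cs)
    rw [List.length_ofFn] at hcat
    refine ⟨hI, ?_, ?_⟩
    · exact runFrom_append hpre (by
        rw [hprez]
        exact runFrom_append hcat.1 (by rw [hcat.2]; exact hpost))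
    · show (p0 :: (ρpre ++ (catRuns ρa ρb (List.ofFn cs) ++ ρpost))).getLast _ ∈ F
      rw [getLast_eq_endSt, endSt_append, hprez, endSt_append, hcat.2, hpostend]
      rw [getLast_eq_endSt] at hF
      exact hF
  have hginj : Set.InjOn g Set.univ := by
    intro c1 _ c2 _ hEq
    simp only [hg, Prod.mk.injEq, true_and] at hEq
    have h1 := List.append_cancel_left hEq
    have h2 := List.append_cancel_right h1
    exact List.ofFn_injective
      (catRuns_inj hlen_ab hab _ _ (by simp) h2)
  have hcard : 2 ^ m ≤ (AccRuns Δ I F W).ncard := by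
    have h1 := Set.ncard_le_ncard_of_injOn g (fun cs _ => hmem cs) hginj
      (accRuns_finite Δ I F W)
    rwa [Set.ncard_univ, Nat.card_eq_fintype_card, Fintype.card_fun,
      Fintype.card_bool, Fintype.card_fin] at h1
  have h2 := hPb W hWne
  have h3 : P.eval W.length ≤ P.eval 1 * K ^ d * (m + 1) ^ d := by
    calc P.eval W.length ≤ P.eval 1 * W.length ^ d := poly_eval_le P _ hW1
      _ ≤ P.eval 1 * (K * (m + 1)) ^ d := by
          apply Nat.mul_le_mul_left
          apply Nat.pow_le_pow_left
          rw [hWlen, hK]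
          nlinarith [hm1, hsl]
      _ = P.eval 1 * K ^ d * (m + 1) ^ d := by rw [mul_pow]; ring
  have : 2 ^ m < 2 ^ m := lt_of_le_of_lt (hcard.trans (h2.trans h3)) hmlt
  exact absurd this (lt_irrefl _)

end Main

/-- A trimmed nondeterministic automaton is polynomially ambiguous iff it is
SCC-unambiguous. -/
theorem polyAmbiguous_iff_sccUnambiguous [Fintype Q] (Δ : Q → A → Q → Prop)
    (I F : Set Q)
    (htrim : ∀ q : Q, ∃ (w : List A) (x : Q × List Q),
      x ∈ AccRuns Δ I F w ∧ q ∈ x.1 :: x.2) :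
    (∃ P : Polynomial ℕ, ∀ w : List A, w ≠ [] →
        (AccRuns Δ I F w).ncard ≤ P.eval w.length) ↔
      SCCUnambiguous Δ := by
  constructor
  · exact fun hP => poly_to_sccUnamb Δ I F htrim hP
  · intro hU
    refine ⟨Polynomial.C (Fintype.card Q) * Polynomial.C (Fintype.card Q) *
      ((Polynomial.X + 1) * Polynomial.C (Fintype.card Q * Fintype.card Q) + 1) ^
        Fintype.card Q, ?_⟩
    intro w _
    refine (accRuns_ncard_le hU I F w).trans (le_of_eq ?_)
    simp only [Polynomial.eval_mul, Polynomial.eval_pow, Polynomial.eval_add,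
      Polynomial.eval_one, Polynomial.eval_C, Polynomial.eval_X]
    ring
end

section
/- Let A be a weighted automaton over an alphabet Σ_{𝒱∪{y}} (words carry an extra {0,1}-component marking the value of a variable y). Construct A' over Σ_𝒱 with state set Q × {0,1}, initial states I × {0}, final states F × {1}, where transitions reading (ā,0) are duplicated on both levels and transitions reading (ā,1) go from level 0 to level 1, keeping weights. Then for every word w̄ over Σ_𝒱, the multiset of weight sequences of accepting runs of A' on w̄ equals the multiset union over all positions i of the multisets of weight sequences of accepting runs of A on (w̄, y ↦ i). -/
variable {Q Q' A R : Type*}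

/-- Transition relation of the projection construction `A'` over `Σ_𝒱`, with states
`Q × Bool`: level-preserving transitions simulate letters with `y`-bit `0`, and
transitions from level `false` to level `true` simulate letters with `y`-bit `1`. -/
def projTrans (Δ : Q → (A × Bool) → Q → Prop) :
    (Q × Bool) → A → (Q × Bool) → Prop :=
  fun p a q =>
    (p.2 = q.2 ∧ Δ p.1 (a, false) q.1) ∨ (p.2 = false ∧ q.2 = true ∧ Δ p.1 (a, true) q.1)

/-- Weight function of the projection construction. -/
def projWgt (wgt : Q → (A × Bool) → Q → R) :
    (Q × Bool) → A → (Q × Bool) → R :=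
  fun p a q => if p.2 = q.2 then wgt p.1 (a, false) q.1 else wgt p.1 (a, true) q.1

/-- `(w̄, y ↦ i)`: the word over `Σ_𝒱 × Bool` whose projection is `w̄` and whose
`Bool`-component is `true` exactly at (0-indexed) position `i`. -/
def markWord (w : List A) (i : ℕ) : List (A × Bool) :=
  w.zipIdx.map fun ja => (ja.1, ja.2 == i)

/-- Accepting runs on `w` whose weight sequence is `s`. -/
def AccRunsW (Δ : Q → A → Q → Prop) (wgt : Q → A → Q → R) (I F : Set Q)
    (w : List A) (s : List R) : Set (Q × List Q) :=
  {x | x ∈ AccRuns Δ I F w ∧ wgtSeq wgt x.1 w x.2 = s}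

/-! ### Auxiliary development for `proj_semantics` -/

section ProjAux

variable {Q A R : Type*}

namespace ProjAux

/-- Recursive version of `markWord`. -/
def mark : List A → ℕ → List (A × Bool)
  | [], _ => []
  | a :: w, 0 => (a, true) :: w.map (fun b => (b, false))
  | a :: w, i + 1 => (a, false) :: mark w i

lemma mark_length (w : List A) (i : ℕ) : (mark w i).length = w.length := by
  induction w generalizing i with
  | nil => rfl
  | cons a w ih => cases i <;> simp [mark, ih]

lemma mark_getElem (w : List A) (i j : ℕ) (h : j < (mark w i).length) (h' : j < w.length) :
    (mark w i)[j] = (w[j], j == i) := by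
  induction w generalizing i j with
  | nil => simp at h'
  | cons a w ih =>
    cases i with
    | zero =>
      cases j with
      | zero => rfl
      | succ j => simp [mark]
    | succ i =>
      cases j with
      | zero => rfl
      | succ j =>
        have h2 : j < (mark w i).length := by
          simpa [mark_length] using h'
        simpa [mark] using ih i j h2 (by simpa using h')

lemma markWord_eq_mark (w : List A) (i : ℕ) : markWord w i = mark w i := by
  apply List.ext_getElem
  · simp [markWord, mark_length]
  · intro j h1 h2
    have h3 : j < w.length := by simpa [markWord] using h1
    simp only [markWord, List.getElem_map, List.getElem_zipIdx, Nat.zero_add]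
    rw [mark_getElem w i j h2 h3]

lemma markWord_length (w : List A) (i : ℕ) : (markWord w i).length = w.length := by
  rw [markWord_eq_mark, mark_length]

/-- Attach levels to the states of a run: level `true` from (0-indexed) position `i` on. -/
def mkLvl : ℕ → List Q → List (Q × Bool)
  | _, [] => []
  | 0, q :: ρ => (q, true) :: ρ.map (fun p => (p, true))
  | i + 1, q :: ρ => (q, false) :: mkLvl i ρ

lemma mkLvl_zero (ρ : List Q) : mkLvl 0 ρ = ρ.map (fun p => (p, true)) := by
  cases ρ <;> rfl

lemma mkLvl_length (i : ℕ) (ρ : List Q) : (mkLvl i ρ).length = ρ.length := by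
  induction ρ generalizing i with
  | nil => cases i <;> rfl
  | cons q ρ ih => cases i <;> simp [mkLvl, ih]

lemma mkLvl_map_fst (i : ℕ) (ρ : List Q) : (mkLvl i ρ).map Prod.fst = ρ := by
  induction ρ generalizing i with
  | nil => cases i <;> rfl
  | cons q ρ ih =>
    cases i with
    | zero => simp [mkLvl, List.map_map, Function.comp_def]
    | succ i => simp [mkLvl, ih]

lemma mkLvl_of_le (i : ℕ) (ρ : List Q) (h : ρ.length ≤ i) :
    mkLvl i ρ = ρ.map (fun p => (p, false)) := by
  induction ρ generalizing i with
  | nil => cases i <;> rfl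
  | cons q ρ ih =>
    cases i with
    | zero => simp at h
    | succ i => simp [mkLvl, ih i (by simpa using h)]

lemma mkLvl_inj (i i' : ℕ) (ρ ρ' : List Q) (hi : i < ρ.length) (hi' : i' < ρ'.length)
    (h : mkLvl i ρ = mkLvl i' ρ') : i = i' ∧ ρ = ρ' := by
  induction ρ generalizing i i' ρ' with
  | nil => simp at hi
  | cons q ρ ih =>
    cases ρ' with
    | nil => simp at hi'
    | cons q' ρ' =>
      cases i with
      | zero =>
        cases i' with
        | zero =>
          refine ⟨rfl, ?_⟩
          simp only [mkLvl, List.cons.injEq, Prod.mk.injEq] at h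
          have := List.map_injective_iff.2 (fun a b hab => by
            simpa using congrArg Prod.fst hab) h.2
          simp [h.1.1, this]
        | succ i' =>
          simp only [mkLvl, List.cons.injEq, Prod.mk.injEq] at h
          exact absurd h.1.2 (by simp)
      | succ i =>
        cases i' with
        | zero =>
          simp only [mkLvl, List.cons.injEq, Prod.mk.injEq] at h
          exact absurd h.1.2 (by simp)
        | succ i' =>
          simp only [mkLvl, List.cons.injEq, Prod.mk.injEq] at h
          obtain ⟨heq, hρ⟩ := ih i i' ρ' (by simpa using hi) (by simpa using hi') h.2
          simp [heq, h.1.1, hρ]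

lemma runFrom_length {S : Type*} (Δ : S → A → S → Prop) (p : S) (w : List A) (ρ : List S)
    (h : RunFrom Δ p w ρ) : ρ.length = w.length := by
  induction w generalizing p ρ with
  | nil => cases ρ with
    | nil => rfl
    | cons q ρ => exact absurd h id
  | cons a w ih =>
    cases ρ with
    | nil => exact absurd h id
    | cons q ρ => simpa using ih q ρ h.2

variable (Δ : Q → (A × Bool) → Q → Prop) (wgt : Q → (A × Bool) → Q → R)

lemma runFrom_true_iff (q : Q) (w : List A) (ρ : List Q) :
    RunFrom (projTrans Δ) (q, true) w (ρ.map (fun p => (p, true))) ↔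
      RunFrom Δ q (w.map (fun a => (a, false))) ρ := by
  induction w generalizing q ρ with
  | nil => cases ρ <;> simp [RunFrom]
  | cons a w ih =>
    cases ρ with
    | nil => simp [RunFrom]
    | cons p ρ =>
      show (projTrans Δ (q, true) a (p, true) ∧ _) ↔ (Δ q (a, false) p ∧ _)
      rw [ih]
      simp [projTrans]

lemma runFrom_true_shape (q : Q) (w : List A) (L : List (Q × Bool))
    (h : RunFrom (projTrans Δ) (q, true) w L) :
    ∃ ρ : List Q, L = ρ.map (fun p => (p, true)) := by
  induction w generalizing q L with
  | nil =>
    cases L with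
    | nil => exact ⟨[], rfl⟩
    | cons p L => exact absurd h id
  | cons a w ih =>
    cases L with
    | nil => exact absurd h id
    | cons p L =>
      obtain ⟨hstep, hrest⟩ := h
      have hp2 : p.2 = true := by
        rcases hstep with ⟨h1, -⟩ | ⟨h1, -, -⟩
        · exact h1.symm
        · exact absurd h1 (by simp)
      obtain ⟨ρ, rfl⟩ := ih p.1 L (by rwa [show (p.1, true) = p by rw [← hp2]])
      exact ⟨p.1 :: ρ, by simp [← hp2]⟩

lemma runFrom_false_iff (q : Q) (w : List A) (i : ℕ) (ρ : List Q) :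
    RunFrom (projTrans Δ) (q, false) w (mkLvl i ρ) ↔ RunFrom Δ q (mark w i) ρ := by
  induction w generalizing q i ρ with
  | nil =>
    cases ρ with
    | nil => cases i <;> simp [mkLvl, mark, RunFrom]
    | cons p ρ => cases i <;> simp [mkLvl, mark, RunFrom]
  | cons a w ih =>
    cases ρ with
    | nil =>
      cases i <;> exact ⟨fun h => absurd h id, fun h => absurd h id⟩
    | cons p ρ =>
      cases i with
      | zero =>
        show (projTrans Δ (q, false) a (p, true) ∧ _) ↔ (Δ q (a, true) p ∧ _)
        rw [runFrom_true_iff]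
        simp [projTrans]
      | succ i =>
        show (projTrans Δ (q, false) a (p, false) ∧ _) ↔ (Δ q (a, false) p ∧ _)
        rw [ih]
        simp [projTrans]

lemma runFrom_false_shape (q : Q) (w : List A) (L : List (Q × Bool))
    (h : RunFrom (projTrans Δ) (q, false) w L) :
    ∃ (i : ℕ) (ρ : List Q), L = mkLvl i ρ := by
  induction w generalizing q L with
  | nil =>
    cases L with
    | nil => exact ⟨0, [], rfl⟩
    | cons p L => exact absurd h id
  | cons a w ih =>
    cases L with
    | nil => exact absurd h id
    | cons p L =>
      obtain ⟨hstep, hrest⟩ := h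
      by_cases hp2 : p.2 = true
      · obtain ⟨ρ, rfl⟩ := runFrom_true_shape Δ p.1 w L
          (by rwa [show (p.1, true) = p by rw [← hp2]])
        exact ⟨0, p.1 :: ρ, by simp [mkLvl, ← hp2]⟩
      · have hp2' : p.2 = false := by simpa using hp2
        obtain ⟨i, ρ, rfl⟩ := ih p.1 L
          (by rwa [show (p.1, false) = p by rw [← hp2']])
        exact ⟨i + 1, p.1 :: ρ, by simp [mkLvl, ← hp2']⟩

lemma wgtSeq_true (q : Q) (w : List A) (ρ : List Q) :
    wgtSeq (projWgt wgt) (q, true) w (ρ.map (fun p => (p, true))) =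
      wgtSeq wgt q (w.map (fun a => (a, false))) ρ := by
  induction w generalizing q ρ with
  | nil => rfl
  | cons a w ih =>
    cases ρ with
    | nil => rfl
    | cons p ρ =>
      show projWgt wgt (q, true) a (p, true) :: _ = wgt q (a, false) p :: _
      rw [ih]
      simp [projWgt]

lemma wgtSeq_false (q : Q) (w : List A) (i : ℕ) (ρ : List Q) :
    wgtSeq (projWgt wgt) (q, false) w (mkLvl i ρ) = wgtSeq wgt q (mark w i) ρ := by
  induction w generalizing q i ρ with
  | nil => rfl
  | cons a w ih =>
    cases ρ with
    | nil => cases i <;> rfl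
    | cons p ρ =>
      cases i with
      | zero =>
        show projWgt wgt (q, false) a (p, true) :: _ = wgt q (a, true) p :: _
        rw [wgtSeq_true]
        simp [projWgt]
      | succ i =>
        show projWgt wgt (q, false) a (p, false) :: _ = wgt q (a, false) p :: _
        rw [ih]
        simp [projWgt]

end ProjAux

/-- `ncard` of a disjoint union over a range. -/
lemma ncard_biUnion_range {α : Type*} (n : ℕ) (f : ℕ → Set α)
    (hfin : ∀ i, (f i).Finite)
    (hdisj : ∀ i j, i ≠ j → Disjoint (f i) (f j)) :
    (⋃ i ∈ Finset.range n, f i).ncard = ∑ i ∈ Finset.range n, (f i).ncard := by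
  induction n with
  | zero => simp
  | succ n ih =>
    have hU : (⋃ i ∈ Finset.range (n + 1), f i) = (⋃ i ∈ Finset.range n, f i) ∪ f n := by
      rw [Finset.range_add_one]
      simp [Set.biUnion_insert, Set.union_comm]
    rw [hU, Set.ncard_union_eq ?_ ?_ (hfin n), ih, Finset.sum_range_succ]
    · rw [Set.disjoint_left]
      rintro x hx hxn
      simp only [Set.mem_iUnion, Finset.mem_range] at hx
      obtain ⟨i, hi, hxi⟩ := hx
      exact (hdisj i n (Nat.ne_of_lt hi)).le_bot ⟨hxi, hxn⟩
    · exact Set.Finite.biUnion (Finset.range n).finite_toSet (fun i _ => hfin i)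

end ProjAux

namespace ProjAux
variable {Q : Type*}

lemma getLast_cons_true (ρ : List Q) (q : Q) :
    ((q, true) :: ρ.map (fun p => (p, true))).getLast (List.cons_ne_nil _ _) =
      ((q :: ρ).getLast (List.cons_ne_nil _ _), true) := by
  induction ρ generalizing q with
  | nil => rfl
  | cons p ρ ih => simpa [List.getLast_cons_cons] using ih p

lemma getLast_cons_false (ρ : List Q) (q : Q) :
    ((q, false) :: ρ.map (fun p => (p, false))).getLast (List.cons_ne_nil _ _) =
      ((q :: ρ).getLast (List.cons_ne_nil _ _), false) := by
  induction ρ generalizing q with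
  | nil => rfl
  | cons p ρ ih => simpa [List.getLast_cons_cons] using ih p

lemma getLast_cons_mkLvl (i : ℕ) (ρ : List Q) (q : Q) (hi : i < ρ.length) :
    ((q, false) :: mkLvl i ρ).getLast (List.cons_ne_nil _ _) =
      ((q :: ρ).getLast (List.cons_ne_nil _ _), true) := by
  induction ρ generalizing i q with
  | nil => simp at hi
  | cons p ρ ih =>
    cases i with
    | zero =>
      show ((q, false) :: (p, true) :: ρ.map (fun p => (p, true))).getLast _ = _
      rw [List.getLast_cons_cons, List.getLast_cons_cons]
      exact getLast_cons_true ρ p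
    | succ i =>
      show ((q, false) :: (p, false) :: mkLvl i ρ).getLast _ = _
      rw [List.getLast_cons_cons, List.getLast_cons_cons]
      exact ih i p (by simpa using hi)

end ProjAux

/-- The multiset of weight sequences of accepting runs of `A'` on `w̄` equals the
multiset union over all positions `i` of the multisets of weight sequences of accepting
runs of `A` on `(w̄, y ↦ i)` (expressed by counting, for every weight sequence, the
accepting runs realizing it). -/
theorem proj_semantics [Fintype Q] (Δ : Q → (A × Bool) → Q → Prop)
    (wgt : Q → (A × Bool) → Q → R) (I F : Set Q)
    (w : List A) (hw : w ≠ []) (s : List R) :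
    (AccRunsW (projTrans Δ) (projWgt wgt)
        (I ×ˢ ({false} : Set Bool)) (F ×ˢ ({true} : Set Bool)) w s).ncard
      = ∑ i ∈ Finset.range w.length, (AccRunsW Δ wgt I F (markWord w i) s).ncard := by
  classical
  set n := w.length with hn
  set S : ℕ → Set (Q × List Q) := fun i => AccRunsW Δ wgt I F (markWord w i) s with hS
  set g : ℕ × Q × List Q → (Q × Bool) × List (Q × Bool) :=
    fun x => ((x.2.1, false), ProjAux.mkLvl x.1 x.2.2) with hg
  set T : Set (ℕ × Q × List Q) := {x | x.1 < n ∧ x.2 ∈ S x.1} with hT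
  -- length of runs in `S i`
  have hSlen : ∀ i q ρ, (q, ρ) ∈ S i → ρ.length = n := by
    intro i q ρ hmem
    obtain ⟨⟨-, hrun, -⟩, -⟩ := hmem
    rw [hn, ← ProjAux.markWord_length w i]
    exact ProjAux.runFrom_length _ _ _ _ hrun
  -- each `S i` is finite
  have hSfin : ∀ i, (S i).Finite := by
    intro i
    refine ((Set.finite_univ.prod (List.finite_length_eq Q n)).subset ?_)
    rintro ⟨q, ρ⟩ hmem
    exact ⟨trivial, hSlen i q ρ hmem⟩
  -- the left-hand set is the image of `T` under `g`
  have himg : AccRunsW (projTrans Δ) (projWgt wgt) (I ×ˢ ({false} : Set Bool))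
      (F ×ˢ ({true} : Set Bool)) w s = g '' T := by
    ext x
    obtain ⟨⟨p1, p2⟩, L⟩ := x
    constructor
    · rintro ⟨⟨hI, hrun, hF⟩, hwgt⟩
      obtain ⟨hI1, hI2⟩ := Set.mem_prod.1 hI
      have hI2' : p2 = false := hI2
      subst hI2'
      obtain ⟨i, ρ, rfl⟩ := ProjAux.runFrom_false_shape Δ p1 w L hrun
      have hρlen : ρ.length = n := by
        rw [← ProjAux.mkLvl_length i ρ, hn]
        exact ProjAux.runFrom_length _ _ _ _ hrun
      have hi : i < ρ.length := by
        by_contra hge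
        push_neg at hge
        rw [ProjAux.mkLvl_of_le i ρ hge] at hF
        rw [ProjAux.getLast_cons_false] at hF
        exact absurd (Set.mem_prod.1 hF).2 (by simp)
      rw [ProjAux.getLast_cons_mkLvl i ρ p1 hi] at hF
      refine ⟨(i, p1, ρ), ⟨?_, ⟨⟨hI1, ?_, ?_⟩, ?_⟩⟩, rfl⟩
      · rw [← hρlen]; exact hi
      · rw [ProjAux.markWord_eq_mark]
        exact (ProjAux.runFrom_false_iff Δ p1 w i ρ).1 hrun
      · exact (Set.mem_prod.1 hF).1
      · rw [ProjAux.markWord_eq_mark, ← ProjAux.wgtSeq_false wgt p1 w i ρ]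
        exact hwgt
    · rintro ⟨⟨i, q, ρ⟩, ⟨hin, ⟨⟨hI, hrun, hF⟩, hwgt⟩⟩, heq⟩
      rw [← heq]
      have hρlen : ρ.length = n := hSlen i q ρ ⟨⟨hI, hrun, hF⟩, hwgt⟩
      have hi : i < ρ.length := by rw [hρlen]; exact hin
      refine ⟨⟨Set.mem_prod.2 ⟨hI, rfl⟩, ?_, ?_⟩, ?_⟩
      · refine (ProjAux.runFrom_false_iff Δ q w i ρ).2 ?_
        rw [← ProjAux.markWord_eq_mark]
        exact hrun
      · show (((q, false) :: ProjAux.mkLvl i ρ).getLast _) ∈ _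
        rw [ProjAux.getLast_cons_mkLvl i ρ q hi]
        exact Set.mem_prod.2 ⟨hF, rfl⟩
      · show wgtSeq (projWgt wgt) (q, false) w (ProjAux.mkLvl i ρ) = s
        rw [ProjAux.wgtSeq_false, ← ProjAux.markWord_eq_mark]
        exact hwgt
  -- `g` is injective on `T`
  have hinj : Set.InjOn g T := by
    rintro ⟨i, q, ρ⟩ h1 ⟨i', q', ρ'⟩ h2 heq
    simp only [hg, Prod.mk.injEq] at heq
    obtain ⟨⟨hq, -⟩, hlvl⟩ := heq
    have l1 : ρ.length = n := hSlen i q ρ h1.2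
    have l2 : ρ'.length = n := hSlen i' q' ρ' h2.2
    have hi : i < ρ.length := by rw [l1]; exact h1.1
    have hi' : i' < ρ'.length := by rw [l2]; exact h2.1
    obtain ⟨hii, hρρ⟩ := ProjAux.mkLvl_inj i i' ρ ρ' hi hi' hlvl
    simp [hq, hii, hρρ]
  rw [himg, Set.ncard_image_of_injOn hinj]
  have hTU : T = ⋃ i ∈ Finset.range n, (({i} : Set ℕ) ×ˢ S i) := by
    ext ⟨i, x⟩
    simp only [hT, Set.mem_setOf_eq, Set.mem_iUnion, Finset.mem_range, Set.mem_prod,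
      Set.mem_singleton_iff, exists_prop]
    constructor
    · rintro ⟨h1, h2⟩; exact ⟨i, h1, rfl, h2⟩
    · rintro ⟨j, hj, rfl, h2⟩; exact ⟨hj, h2⟩
  rw [hTU, ncard_biUnion_range n _ (fun i => (Set.finite_singleton i).prod (hSfin i))
    (fun i j hij => by
      rw [Set.disjoint_left]
      rintro ⟨a, b⟩ ⟨ha, -⟩ ⟨hb, -⟩
      exact hij (ha.symm.trans hb))]
  refine Finset.sum_congr rfl fun i _ => ?_
  rw [Set.singleton_prod, Set.ncard_image_of_injOn (fun a _ b _ h => by simpa using h)]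
end

section
/- In the projection construction A' (with states Q × {0,1}): if A is SCC-unambiguous then A' is SCC-unambiguous. Moreover, two states (p,b) and (q,c) of A' lie in the same SCC only if b = c and p, q lie in the same SCC of A. -/
variable {Q Q' A R : Type*}

section Aux
variable {Q A : Type*} {Δ : Q → (A × Bool) → Q → Prop}

/-- Along any run of `projTrans Δ` starting in level `true`, every state is at level `true`. -/
lemma projAux_snd_true : ∀ (u : List A) (s : Q × Bool) (ρ : List (Q × Bool)),
    RunFrom (projTrans Δ) s u ρ → s.2 = true → ∀ x ∈ ρ, x.2 = true
  | [], _, [], _, _ => by simp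
  | [], _, _ :: _, hr, _ => hr.elim
  | _ :: _, _, [], hr, _ => hr.elim
  | a :: u, s, q :: ρ, hr, hs => by
    obtain ⟨hstep, hrest⟩ := hr
    have hq : q.2 = true := by
      rcases hstep with ⟨he, _⟩ | ⟨he, _, _⟩
      · rw [← he]; exact hs
      · rw [hs] at he; exact absurd he (by simp)
    intro x hx
    rcases List.mem_cons.mp hx with rfl | hx
    · exact hq
    · exact projAux_snd_true u q ρ hrest hq x hx

/-- If a run ends in level `false`, every state along it is at level `false`. -/
lemma projAux_snd_false : ∀ (u : List A) (s : Q × Bool) (ρ : List (Q × Bool)),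
    RunFrom (projTrans Δ) s u ρ →
    ((s :: ρ).getLast (List.cons_ne_nil _ _)).2 = false → ∀ x ∈ s :: ρ, x.2 = false
  | [], s, [], _, hl => by simpa using hl
  | [], _, _ :: _, hr, _ => hr.elim
  | _ :: _, _, [], hr, _ => hr.elim
  | a :: u, s, q :: ρ, hr, hl => by
    obtain ⟨hstep, hrest⟩ := hr
    have hl' : ((q :: ρ).getLast (List.cons_ne_nil _ _)).2 = false := by
      rwa [List.getLast_cons (List.cons_ne_nil _ _)] at hl
    have ih := projAux_snd_false u q ρ hrest hl'
    intro x hx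
    rcases List.mem_cons.mp hx with rfl | hx
    · rcases hstep with ⟨he, _⟩ | ⟨he, _, _⟩
      · rw [he]; exact ih q List.mem_cons_self
      · exact he
    · exact ih x hx

/-- Every state along a run between two states at the same level `b` is at level `b`. -/
lemma projAux_level (u : List A) (p q : Q) (b : Bool) (ρ : List (Q × Bool))
    (hr : RunFrom (projTrans Δ) (p, b) u ρ)
    (hl : ((p, b) :: ρ).getLast (List.cons_ne_nil _ _) = (q, b)) :
    ∀ x ∈ ρ, x.2 = b := by
  cases b with
  | true => exact projAux_snd_true u (p, true) ρ hr rfl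
  | false =>
    intro x hx
    exact projAux_snd_false u (p, false) ρ hr (by rw [hl]) x (List.mem_cons_of_mem _ hx)

/-- A level-`b` run of `projTrans Δ` projects to a run of `Δ` on `false`-marked letters. -/
lemma projAux_proj : ∀ (u : List A) (p : Q) (b : Bool) (ρ : List (Q × Bool)),
    RunFrom (projTrans Δ) (p, b) u ρ → (∀ x ∈ ρ, x.2 = b) →
    RunFrom Δ p (u.map fun a => (a, false)) (ρ.map Prod.fst)
  | [], _, _, [], _, _ => trivial
  | [], _, _, _ :: _, hr, _ => hr.elim
  | _ :: _, _, _, [], hr, _ => hr.elim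
  | a :: u, p, b, q :: ρ, hr, hb => by
    obtain ⟨hstep, hrest⟩ := hr
    have hq : q.2 = b := hb q List.mem_cons_self
    have hq' : q = (q.1, b) := by rw [← hq]
    refine ⟨?_, ?_⟩
    · rcases hstep with ⟨_, hd⟩ | ⟨he, ht, _⟩
      · exact hd
      · simp only at he; rw [he] at hq; rw [hq] at ht; exact absurd ht (by simp)
    · rw [hq'] at hrest
      exact projAux_proj u q.1 b ρ hrest fun x hx => hb x (List.mem_cons_of_mem _ hx)

lemma projAux_eq_map (b : Bool) (ρ : List (Q × Bool)) (hb : ∀ x ∈ ρ, x.2 = b) :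
    ρ = ρ.map (fun x => (x.1, b)) := by
  induction ρ with
  | nil => rfl
  | cons q ρ ih =>
    have hq := hb q List.mem_cons_self
    simp only [List.map_cons]
    rw [← ih fun x hx => hb x (List.mem_cons_of_mem _ hx), ← hq]

lemma projAux_getLast (p q : Q) (b : Bool) (ρ : List (Q × Bool))
    (hlev : ∀ x ∈ ρ, x.2 = b)
    (hl : ((p, b) :: ρ).getLast (List.cons_ne_nil _ _) = (q, b)) :
    ((p :: ρ.map Prod.fst).getLast (List.cons_ne_nil _ _), b) = (q, b) := by
  have hmap : (p, b) :: ρ = ((p :: ρ.map Prod.fst).map fun x => (x, b)) := by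
    rw [List.map_cons]
    congr 1
    rw [List.map_map]
    exact projAux_eq_map b ρ hlev
  have h1 : ((p, b) :: ρ).getLast? = some (q, b) := by
    rw [List.getLast?_eq_getLast (List.cons_ne_nil _ _), hl]
  have h2 : (((p :: ρ.map Prod.fst).map fun x => (x, b)).getLast?) =
      some ((p :: ρ.map Prod.fst).getLast (List.cons_ne_nil _ _), b) := by
    rw [List.getLast?_eq_getLast (by simp), List.getLast_map]
  rw [hmap, h2] at h1
  exact Option.some_injective _ h1

/-- Extract an `Δ`-run witness (`HasRun`) from a same-level `projTrans`-run. -/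
lemma projAux_hasRun (u : List A) (p q : Q) (b : Bool)
    (hu : u ≠ []) (h : HasRun (projTrans Δ) (p, b) u (q, b)) :
    ∃ v : List (A × Bool), v ≠ [] ∧ HasRun Δ p v q := by
  obtain ⟨ρ, hr, hl⟩ := h
  have hlev := projAux_level u p q b ρ hr hl
  refine ⟨u.map fun a => (a, false), by simpa using hu,
    ρ.map Prod.fst, projAux_proj u p b ρ hr hlev, ?_⟩
  exact congrArg Prod.fst (projAux_getLast p q b ρ hlev hl)

/-- Levels are monotone: a run starting at level `true` ends at level `true`. -/
lemma projAux_mono (u : List A) (s t : Q × Bool)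
    (h : HasRun (projTrans Δ) s u t) (hs : s.2 = true) : t.2 = true := by
  obtain ⟨ρ, hr, hl⟩ := h
  have := List.getLast_mem (l := s :: ρ) (List.cons_ne_nil _ _)
  rw [hl] at this
  rcases List.mem_cons.mp this with rfl | ht
  · exact hs
  · exact projAux_snd_true u s ρ hr hs t ht

end Aux


/-- If `A` is SCC-unambiguous then the projection construction `A'` is
SCC-unambiguous; moreover, two states `(p,b)` and `(q,c)` of `A'` lie in the same SCC
only if `b = c` and `p, q` lie in the same SCC of `A`. -/
theorem sccUnambiguous_projTrans (Δ : Q → (A × Bool) → Q → Prop)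
    (h : SCCUnambiguous Δ) :
    SCCUnambiguous (projTrans Δ) ∧
      ∀ (p q : Q) (b c : Bool),
        SameSCC (projTrans Δ) (p, b) (q, c) → b = c ∧ SameSCC Δ p q := by
  have key : ∀ (p q : Q) (b c : Bool),
      SameSCC (projTrans Δ) (p, b) (q, c) → b = c ∧ SameSCC Δ p q := by
    intro p q b c hscc
    rcases hscc with heq | ⟨⟨u, hu, hru⟩, ⟨v, hv, hrv⟩⟩
    · obtain ⟨h1, h2⟩ := Prod.mk.injEq .. ▸ heq
      exact ⟨(Prod.ext_iff.mp heq).2, Or.inl (Prod.ext_iff.mp heq).1⟩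
    · have hbc : b = c := by
        cases b <;> cases c
        · rfl
        · exact absurd (projAux_mono v _ _ hrv rfl) (by simp)
        · exact (projAux_mono u _ _ hru rfl).symm
        · rfl
      subst hbc
      obtain ⟨u', hu', hru'⟩ := projAux_hasRun u p q b hu hru
      obtain ⟨v', hv', hrv'⟩ := projAux_hasRun v q p b hv hrv
      exact ⟨rfl, Or.inr ⟨⟨u', hu', hru'⟩, ⟨v', hv', hrv'⟩⟩⟩
  refine ⟨?_, key⟩
  rintro ⟨p, b⟩ ⟨q, c⟩ hscc u ρ₁ ρ₂ hu h1 h2 hl1 hl2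
  obtain ⟨hbc, hpq⟩ := key p q b c hscc
  subst hbc
  have hlev1 := projAux_level u p q b ρ₁ h1 hl1
  have hlev2 := projAux_level u p q b ρ₂ h2 hl2
  have hr1 := projAux_proj u p b ρ₁ h1 hlev1
  have hr2 := projAux_proj u p b ρ₂ h2 hlev2
  have hgl : ∀ (ρ : List (Q × Bool)), (∀ x ∈ ρ, x.2 = b) →
      ((p, b) :: ρ).getLast (List.cons_ne_nil _ _) = (q, b) →
      (p :: ρ.map Prod.fst).getLast (List.cons_ne_nil _ _) = q := by
    intro ρ hlev hl
    exact congrArg Prod.fst (projAux_getLast p q b ρ hlev hl)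
  have heq : ρ₁.map Prod.fst = ρ₂.map Prod.fst :=
    h p q hpq (u.map fun a => (a, false)) _ _ (by simpa using hu) hr1 hr2
      (hgl ρ₁ hlev1 hl1) (hgl ρ₂ hlev2 hl2)
  calc ρ₁ = (ρ₁.map Prod.fst).map (fun x => (x, b)) := by
        rw [List.map_map]; exact projAux_eq_map b ρ₁ hlev1
    _ = (ρ₂.map Prod.fst).map (fun x => (x, b)) := by rw [heq]
    _ = ρ₂ := by rw [List.map_map]; exact (projAux_eq_map b ρ₂ hlev2).symm
end
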